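/- arXiv:1507.06371 — 2 statements merged into one kernel-verified Lean document; each statement's English description precedes it below -/
import Mathlib

section
/- Let F : ℝ^p → ℝ be differentiable and let β̂ be a minimizer of L(β) = F(β) + λ₁ ∑_k w_k |β_k| + λ₂ ∑_k β_k² with λ₂ > 0. If β̂_a · β̂_b > 0, then |β̂_a − β̂_b| ≤ (1/(2λ₂)) · |∂F/∂β_a(β̂) − ∂F/∂β_b(β̂)| + (λ₁/(2λ₂)) · |w_a − w_b|. -/
open scoped BigOperators

open Finset in
/-- Stationarity at a nonzero coordinate of the minimizer. -/
lemma stationarity {p : ℕ} (F : EuclideanSpace ℝ (Fin p) → ℝ) (hF : Differentiable ℝ F)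
    (lam1 lam2 : ℝ) (w : Fin p → ℝ)
    (L : EuclideanSpace ℝ (Fin p) → ℝ)
    (hL : ∀ β, L β = F β + lam1 * ∑ k, w k * |β k| + lam2 * ∑ k, (β k) ^ 2)
    (βhat : EuclideanSpace ℝ (Fin p))
    (hmin : ∀ β, L βhat ≤ L β)
    (c : Fin p) (hc : βhat c ≠ 0) :
    fderiv ℝ F βhat (EuclideanSpace.single c 1) + lam1 * w c * (SignType.sign (βhat c) : ℝ)
      + 2 * lam2 * βhat c = 0 := by
  set v : EuclideanSpace ℝ (Fin p) := EuclideanSpace.single c 1 with hv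
  set path : ℝ → EuclideanSpace ℝ (Fin p) := fun t => βhat + t • v with hpathdef
  have hpath0 : path 0 = βhat := by simp [hpathdef]
  have hcoord : ∀ t k, path t k = βhat k + t * (if k = c then 1 else 0) := by
    intro t k
    simp [hpathdef, hv, EuclideanSpace.single_apply]
  have hcoordc : ∀ t, path t c = βhat c + t := by
    intro t; rw [hcoord]; simp
  have hcoordne : ∀ t k, k ≠ c → path t k = βhat k := by
    intro t k hk; rw [hcoord]; simp [hk]
  set g : ℝ → ℝ := fun t => L (path t) with hgdef
  -- explicit form of g
  have hgform : ∀ t, g t = F (path t) + lam1 * w c * |βhat c + t| + lam2 * (βhat c + t) ^ 2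
      + (lam1 * ∑ k ∈ univ.erase c, w k * |βhat k|
         + lam2 * ∑ k ∈ univ.erase c, (βhat k) ^ 2) := by
    intro t
    have h1 : ∑ k, w k * |path t k| = w c * |βhat c + t| + ∑ k ∈ univ.erase c, w k * |βhat k| := by
      rw [← Finset.add_sum_erase _ _ (Finset.mem_univ c), hcoordc]
      congr 1
      exact Finset.sum_congr rfl fun k hk => by rw [hcoordne t k (Finset.ne_of_mem_erase hk)]
    have h2 : ∑ k, (path t k) ^ 2 = (βhat c + t) ^ 2 + ∑ k ∈ univ.erase c, (βhat k) ^ 2 := by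
      rw [← Finset.add_sum_erase _ _ (Finset.mem_univ c), hcoordc]
      congr 1
      exact Finset.sum_congr rfl fun k hk => by rw [hcoordne t k (Finset.ne_of_mem_erase hk)]
    rw [hgdef]; simp only [hL, h1, h2]; ring
  -- derivative of each piece at 0
  have hpathderiv : HasDerivAt path v 0 := by
    have : HasDerivAt (fun t : ℝ => t • v) ((1 : ℝ) • v) 0 := (hasDerivAt_id (0 : ℝ)).smul_const v
    exact (this.const_add βhat).congr_deriv (one_smul ℝ v)
  have hFderiv : HasDerivAt (fun t => F (path t)) (fderiv ℝ F βhat v) 0 := by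
    have := (hF (path 0)).hasFDerivAt.comp_hasDerivAt 0 hpathderiv
    rw [hpath0] at this
    exact this
  have hinner : HasDerivAt (fun t : ℝ => βhat c + t) 1 0 := by
    simpa using (hasDerivAt_id (0 : ℝ)).const_add (βhat c)
  have habs : HasDerivAt (fun t : ℝ => |βhat c + t|) ((SignType.sign (βhat c) : ℝ)) 0 := by
    have houter : HasDerivAt (fun x : ℝ => |x|) ((SignType.sign (βhat c) : ℝ)) (βhat c + 0) := by
      simpa using hasDerivAt_abs hc
    have := houter.comp 0 hinner
    exact this.congr_deriv (by simp)
  have hsq : HasDerivAt (fun t : ℝ => (βhat c + t) ^ 2) (2 * βhat c) 0 := by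
    have := hinner.pow 2
    exact this.congr_deriv (by norm_num)
  have hg : HasDerivAt g
      (fderiv ℝ F βhat v + lam1 * w c * (SignType.sign (βhat c) : ℝ) + 2 * lam2 * βhat c) 0 := by
    have h := ((hFderiv.add ((habs.const_mul (lam1 * w c)).add
        (hsq.const_mul lam2))).add_const
        (lam1 * ∑ k ∈ univ.erase c, w k * |βhat k|
         + lam2 * ∑ k ∈ univ.erase c, (βhat k) ^ 2))
    have heq : (fun t => F (path t) + (lam1 * w c * |βhat c + t| + lam2 * (βhat c + t) ^ 2)
        + (lam1 * ∑ k ∈ univ.erase c, w k * |βhat k|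
           + lam2 * ∑ k ∈ univ.erase c, (βhat k) ^ 2)) = g := by
      funext t; rw [hgform t]; ring
    replace h : HasDerivAt g (fderiv ℝ F βhat v + (lam1 * w c * (SignType.sign (βhat c) : ℝ) + lam2 * (2 * βhat c))) 0 := by rw [← heq]; exact h
    convert h using 1; ring
  have hloc : IsLocalMin g 0 := by
    apply Filter.Eventually.of_forall
    intro t
    show g 0 ≤ g t
    rw [hgdef]
    simpa [hpath0] using hmin (path t)
  exact hloc.hasDerivAt_eq_zero hg

/-- Grouping-effect bound for two same-sign coordinates of a minimizer of an
elastic-net-type penalized objective. -/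
theorem stmt_1 {p : ℕ} (F : EuclideanSpace ℝ (Fin p) → ℝ) (hF : Differentiable ℝ F)
    (lam1 lam2 : ℝ) (hlam1 : 0 ≤ lam1) (hlam2 : 0 < lam2)
    (w : Fin p → ℝ) (hw : ∀ k, 0 ≤ w k)
    (L : EuclideanSpace ℝ (Fin p) → ℝ)
    (hL : ∀ β, L β = F β + lam1 * ∑ k, w k * |β k| + lam2 * ∑ k, (β k) ^ 2)
    (βhat : EuclideanSpace ℝ (Fin p))
    (hmin : ∀ β, L βhat ≤ L β)
    (a b : Fin p) (hab : βhat a * βhat b > 0) :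
    |βhat a - βhat b| ≤
      (1 / (2 * lam2)) * |fderiv ℝ F βhat (EuclideanSpace.single a 1) -
          fderiv ℝ F βhat (EuclideanSpace.single b 1)| +
        (lam1 / (2 * lam2)) * |w a - w b| := by
  have ha : βhat a ≠ 0 := fun h => by simp [h] at hab
  have hb : βhat b ≠ 0 := fun h => by simp [h] at hab
  set Da := fderiv ℝ F βhat (EuclideanSpace.single a 1) with hDa
  set Db := fderiv ℝ F βhat (EuclideanSpace.single b 1) with hDb
  set s : ℝ := (SignType.sign (βhat a) : ℝ) with hs
  have hsame : (SignType.sign (βhat b) : ℝ) = s := by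
    rcases mul_pos_iff.mp hab with ⟨h1, h2⟩ | ⟨h1, h2⟩ <;>
      simp [hs, sign_pos, sign_neg, h1, h2]
  have hs1 : |s| = 1 := by
    rcases lt_or_gt_of_ne ha with h | h <;> simp [hs, sign_pos, sign_neg, h]
  have eqa := stationarity F hF lam1 lam2 w L hL βhat hmin a ha
  have eqb := stationarity F hF lam1 lam2 w L hL βhat hmin b hb
  rw [hsame] at eqb
  rw [← hDa] at eqa; rw [← hDb] at eqb
  have key : 2 * lam2 * (βhat a - βhat b) = (Db - Da) + lam1 * s * (w b - w a) := by
    rw [← hs] at eqa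
    nlinarith [eqa, eqb]
  have habs : |2 * lam2 * (βhat a - βhat b)| ≤ |Da - Db| + lam1 * |w a - w b| := by
    rw [key]
    calc |(Db - Da) + lam1 * s * (w b - w a)|
        ≤ |Db - Da| + |lam1 * s * (w b - w a)| := abs_add_le _ _
      _ = |Da - Db| + lam1 * |w a - w b| := by
          rw [abs_sub_comm Db Da, abs_mul, abs_mul, hs1, abs_of_nonneg hlam1,
            abs_sub_comm (w b) (w a)]; ring
  rw [abs_mul, abs_of_pos (by linarith : (0:ℝ) < 2 * lam2)] at habs
  have h2 : 0 < 2 * lam2 := by linarith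
  calc |βhat a - βhat b| = (2 * lam2 * |βhat a - βhat b|) / (2 * lam2) := by
        field_simp
    _ ≤ (|Da - Db| + lam1 * |w a - w b|) / (2 * lam2) := by gcongr
    _ = (1 / (2 * lam2)) * |Da - Db| + (lam1 / (2 * lam2)) * |w a - w b| := by ring
end

section
/- Let β̂ minimize L(β) = F(β) + λ₁ ∑_k w_k |β_k| + λ₂‖β‖² where F(β) = (1/n)∑_{i=1}^n [−⟨β,X_i⟩ + log ∑_{j∈R_i} e^{⟨β,X_j⟩}], λ₂ > 0. Suppose β̂_a β̂_b > 0, |x_{ja} − x_{jb}| ≤ ε for all j ∈ {1,…,n}, and |w_a − w_b| ≤ η. Then |β̂_a − β̂_b| ≤ (1/(2λ₂))(2ε + λ₁ η). -/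
open scoped BigOperators

/-- Sums differing only at two coordinates. -/
lemma stmt_15_sumdiff {p : ℕ} {a b : Fin p} (hab : a ≠ b) (f g : Fin p → ℝ)
    (h : ∀ k, k ≠ a → k ≠ b → f k = g k) :
    ∑ k, f k = ∑ k, g k + ((f a - g a) + (f b - g b)) := by
  have h1 : ∑ k, (f k - g k) = ∑ k ∈ ({a, b} : Finset (Fin p)), (f k - g k) := by
    refine (Finset.sum_subset (Finset.subset_univ _) ?_).symm
    intro k _ hk
    simp only [Finset.mem_insert, Finset.mem_singleton, not_or] at hk
    rw [h k hk.1 hk.2]; ring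
  rw [Finset.sum_pair hab] at h1
  have h2 : ∑ k, (f k - g k) = ∑ k, f k - ∑ k, g k := Finset.sum_sub_distrib f g
  linarith

/-- One-sided quantitative grouping effect. -/
lemma stmt_15_aux {n p : ℕ} (X : Fin n → Fin p → ℝ) (R : Fin n → Finset (Fin n))
    (hR : ∀ i, (R i).Nonempty) (lam1 lam2 : ℝ) (hlam1 : 0 ≤ lam1) (hlam2 : 0 < lam2)
    (w : Fin p → ℝ) (hw : ∀ k, 0 ≤ w k)
    (F L : EuclideanSpace ℝ (Fin p) → ℝ)
    (hF : ∀ β, F β = (1 / (n : ℝ)) * ∑ i, (-(∑ k, β k * X i k) +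
      Real.log (∑ j ∈ R i, Real.exp (∑ k, β k * X j k))))
    (hL : ∀ β, L β = F β + lam1 * ∑ k, w k * |β k| + lam2 * ‖β‖ ^ 2)
    (βhat : EuclideanSpace ℝ (Fin p)) (hmin : ∀ β, L βhat ≤ L β)
    (a b : Fin p) (hab : βhat a * βhat b > 0)
    (ε η : ℝ) (hx : ∀ j, |X j a - X j b| ≤ ε) (hwab : |w a - w b| ≤ η) :
    βhat a - βhat b ≤ (1 / (2 * lam2)) * (2 * ε + lam1 * η) := by
  have hη : 0 ≤ η := le_trans (abs_nonneg _) hwab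
  -- Dispose of the degenerate case n = 0.
  rcases Nat.eq_zero_or_pos n with hn | hn
  · exfalso
    subst hn
    have hF0 : ∀ β, F β = 0 := by
      intro β; rw [hF]; simp
    have h := hmin 0
    rw [hL, hL, hF0, hF0] at h
    have hz1 : ∑ k, w k * |(0 : EuclideanSpace ℝ (Fin p)) k| = 0 := by simp
    have hz2 : ‖(0 : EuclideanSpace ℝ (Fin p))‖ = 0 := norm_zero
    rw [hz1, hz2] at h
    have hβa : βhat a ≠ 0 := by
      intro h0
      rw [h0] at hab; simp at hab
    have hβ : βhat ≠ 0 := by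
      intro h0; apply hβa; rw [h0]; rfl
    have hnpos : 0 < ‖βhat‖ ^ 2 := pow_pos (norm_pos_iff.mpr hβ) 2
    have hsum : 0 ≤ ∑ k, w k * |βhat k| :=
      Finset.sum_nonneg fun k _ => mul_nonneg (hw k) (abs_nonneg _)
    nlinarith
  have hε : 0 ≤ ε := le_trans (abs_nonneg _) (hx ⟨0, hn⟩)
  have hn' : (n : ℝ) ≠ 0 := Nat.cast_ne_zero.mpr hn.ne'
  have hRHS : 0 ≤ (1 / (2 * lam2)) * (2 * ε + lam1 * η) := by
    have h1 : 0 ≤ 2 * ε + lam1 * η := by nlinarith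
    positivity
  -- Dispose of the case βhat a ≤ βhat b.
  obtain ⟨Δ, hΔ⟩ : ∃ Δ : ℝ, Δ = βhat a - βhat b := ⟨_, rfl⟩
  rw [show βhat a - βhat b = Δ from hΔ.symm]
  rcases le_or_gt Δ 0 with hΔ0 | hΔ0
  · linarith
  have hab' : a ≠ b := by
    intro h; rw [h] at hΔ; rw [hΔ] at hΔ0; simp at hΔ0
  -- Key inequality for small perturbations t.
  have key : ∀ t : ℝ, 0 < t → t ≤ Δ / 2 →
      lam2 * (2 * t * Δ - 2 * t ^ 2) ≤ 2 * (t * ε) + lam1 * (t * η) := by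
    intro t ht htΔ
    obtain ⟨βt, htA, htB, htO⟩ :
        ∃ βt : EuclideanSpace ℝ (Fin p), βt a = βhat a - t ∧ βt b = βhat b + t ∧
          ∀ k, k ≠ a → k ≠ b → βt k = βhat k := by
      refine ⟨WithLp.toLp 2 (fun k => if k = a then βhat a - t else if k = b then βhat b + t else βhat k :
        Fin p → ℝ), ?_, ?_, ?_⟩
      · simp
      · simp [Ne.symm hab']
      · intro k h1 h2; simp [h1, h2]
    obtain ⟨c, hc⟩ : ∃ c : ℝ, c = t * ε := ⟨_, rfl⟩
    have hc0 : 0 ≤ c := by rw [hc]; positivity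
    -- inner product change
    have hsum : ∀ j, ∑ k, βt k * X j k =
        ∑ k, βhat k * X j k + ((-t) * X j a + t * X j b) := by
      intro j
      have := stmt_15_sumdiff hab' (fun k => βt k * X j k) (fun k => βhat k * X j k)
        (fun k h1 h2 => by simp only []; rw [htO k h1 h2])
      simp only [htA, htB] at this
      rw [this]; ring
    have hdelta : ∀ j, |(-t) * X j a + t * X j b| ≤ c := by
      intro j
      have h1 : (-t) * X j a + t * X j b = t * (X j b - X j a) := by ring
      rw [h1, abs_mul]
      have h2 : |X j b - X j a| ≤ ε := by rw [abs_sub_comm]; exact hx j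
      have h3 : |t| = t := abs_of_pos ht
      rw [h3, hc]
      exact mul_le_mul_of_nonneg_left h2 ht.le
    -- F bound
    have hFle : F βt ≤ F βhat + 2 * c := by
      rw [hF, hF]
      have keyi : ∀ i : Fin n,
          (-(∑ k, βt k * X i k) + Real.log (∑ j ∈ R i, Real.exp (∑ k, βt k * X j k))) ≤
          (-(∑ k, βhat k * X i k) +
            Real.log (∑ j ∈ R i, Real.exp (∑ k, βhat k * X j k))) + 2 * c := by
        intro i
        have hlin : -(∑ k, βt k * X i k) ≤ -(∑ k, βhat k * X i k) + c := by
          rw [hsum i]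
          have := (abs_le.mp (hdelta i)).1
          linarith
        have hpos : 0 < ∑ j ∈ R i, Real.exp (∑ k, βhat k * X j k) :=
          Finset.sum_pos (fun j _ => Real.exp_pos _) (hR i)
        have hpos' : 0 < ∑ j ∈ R i, Real.exp (∑ k, βt k * X j k) :=
          Finset.sum_pos (fun j _ => Real.exp_pos _) (hR i)
        have hSle : (∑ j ∈ R i, Real.exp (∑ k, βt k * X j k)) ≤
            Real.exp c * ∑ j ∈ R i, Real.exp (∑ k, βhat k * X j k) := by
          rw [Finset.mul_sum]
          apply Finset.sum_le_sum
          intro j _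
          rw [← Real.exp_add]
          apply Real.exp_le_exp.mpr
          rw [hsum j]
          have := (abs_le.mp (hdelta j)).2
          linarith
        have hlog : Real.log (∑ j ∈ R i, Real.exp (∑ k, βt k * X j k)) ≤
            c + Real.log (∑ j ∈ R i, Real.exp (∑ k, βhat k * X j k)) := by
          have := Real.log_le_log hpos' hSle
          rwa [Real.log_mul (Real.exp_ne_zero _) (ne_of_gt hpos), Real.log_exp] at this
        linarith
      have hsle : ∑ i, (-(∑ k, βt k * X i k) +
          Real.log (∑ j ∈ R i, Real.exp (∑ k, βt k * X j k))) ≤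
          (∑ i, (-(∑ k, βhat k * X i k) +
            Real.log (∑ j ∈ R i, Real.exp (∑ k, βhat k * X j k)))) + n * (2 * c) := by
        calc ∑ i, (-(∑ k, βt k * X i k) +
              Real.log (∑ j ∈ R i, Real.exp (∑ k, βt k * X j k)))
            ≤ ∑ i, ((-(∑ k, βhat k * X i k) +
              Real.log (∑ j ∈ R i, Real.exp (∑ k, βhat k * X j k))) + 2 * c) :=
              Finset.sum_le_sum fun i _ => keyi i
          _ = (∑ i, (-(∑ k, βhat k * X i k) +
              Real.log (∑ j ∈ R i, Real.exp (∑ k, βhat k * X j k)))) + n * (2 * c) := by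
              rw [Finset.sum_add_distrib, Finset.sum_const, Finset.card_univ,
                Fintype.card_fin, nsmul_eq_mul]
      have h0 : (0 : ℝ) ≤ 1 / (n : ℝ) := by positivity
      calc (1 / (n : ℝ)) * ∑ i, (-(∑ k, βt k * X i k) +
            Real.log (∑ j ∈ R i, Real.exp (∑ k, βt k * X j k)))
          ≤ (1 / (n : ℝ)) * ((∑ i, (-(∑ k, βhat k * X i k) +
            Real.log (∑ j ∈ R i, Real.exp (∑ k, βhat k * X j k)))) + n * (2 * c)) :=
            mul_le_mul_of_nonneg_left hsle h0
        _ = (1 / (n : ℝ)) * (∑ i, (-(∑ k, βhat k * X i k) +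
            Real.log (∑ j ∈ R i, Real.exp (∑ k, βhat k * X j k)))) + 2 * c := by
            field_simp
    -- penalty bound
    have hpen : ∑ k, w k * |βt k| ≤ ∑ k, w k * |βhat k| + t * η := by
      have hs := stmt_15_sumdiff hab' (fun k => w k * |βt k|) (fun k => w k * |βhat k|)
        (fun k h1 h2 => by simp only []; rw [htO k h1 h2])
      simp only [htA, htB] at hs
      rw [hs]
      have hkey : w a * |βhat a - t| - w a * |βhat a| +
          (w b * |βhat b + t| - w b * |βhat b|) ≤ t * η := by
        rcases lt_trichotomy (βhat a) 0 with ha | ha | ha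
        · have hb : βhat b < 0 := by nlinarith
          have h1 : βhat a - t < 0 := by linarith
          have h2 : βhat b + t < 0 := by
            rw [hΔ] at htΔ; linarith
          rw [abs_of_neg ha, abs_of_neg hb, abs_of_neg h1, abs_of_neg h2]
          have h3 : w a * -(βhat a - t) - w a * -βhat a +
              (w b * -(βhat b + t) - w b * -βhat b) = t * (w a - w b) := by ring
          rw [h3]
          calc t * (w a - w b) ≤ |t * (w a - w b)| := le_abs_self _
            _ = t * |w a - w b| := by rw [abs_mul, abs_of_pos ht]
            _ ≤ t * η := mul_le_mul_of_nonneg_left hwab ht.le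
        · rw [ha] at hab; simp at hab
        · have hb : 0 < βhat b := by nlinarith
          have h1 : 0 < βhat a - t := by
            rw [hΔ] at htΔ; linarith
          have h2 : 0 < βhat b + t := by linarith
          rw [abs_of_pos ha, abs_of_pos hb, abs_of_pos h1, abs_of_pos h2]
          have h3 : w a * (βhat a - t) - w a * βhat a +
              (w b * (βhat b + t) - w b * βhat b) = t * (w b - w a) := by ring
          rw [h3]
          calc t * (w b - w a) ≤ |t * (w b - w a)| := le_abs_self _
            _ = t * |w b - w a| := by rw [abs_mul, abs_of_pos ht]
            _ = t * |w a - w b| := by rw [abs_sub_comm (w b) (w a)]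
            _ ≤ t * η := mul_le_mul_of_nonneg_left hwab ht.le
      linarith
    -- norm identity
    have normsq : ∀ x : EuclideanSpace ℝ (Fin p), ‖x‖ ^ 2 = ∑ k, (x k) ^ 2 := by
      intro x
      rw [EuclideanSpace.norm_eq, Real.sq_sqrt (by positivity)]
      simp [sq_abs]
    have hnorm : ‖βhat‖ ^ 2 - ‖βt‖ ^ 2 = 2 * t * Δ - 2 * t ^ 2 := by
      rw [normsq, normsq]
      have hs := stmt_15_sumdiff hab' (fun k => (βhat k) ^ 2) (fun k => (βt k) ^ 2)
        (fun k h1 h2 => by simp only []; rw [htO k h1 h2])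
      simp only [htA, htB] at hs
      rw [hs, hΔ]; ring
    -- combine
    have hmain := hmin βt
    rw [hL, hL] at hmain
    have h1 : lam2 * ‖βhat‖ ^ 2 - lam2 * ‖βt‖ ^ 2 = lam2 * (2 * t * Δ - 2 * t ^ 2) := by
      rw [← hnorm]; ring
    have h2 := mul_le_mul_of_nonneg_left hpen hlam1
    rw [mul_add] at h2
    have h3 : 2 * c = 2 * (t * ε) := by rw [hc]
    linarith
  -- Take t → 0.
  have hfin : 2 * lam2 * Δ ≤ 2 * ε + lam1 * η := by
    apply le_of_forall_pos_le_add
    intro δ hδ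
    obtain ⟨t, ht, htΔ, htδ⟩ : ∃ t : ℝ, 0 < t ∧ t ≤ Δ / 2 ∧ 2 * lam2 * t ≤ δ := by
      refine ⟨min (Δ / 2) (δ / (2 * lam2)), ?_, min_le_left _ _, ?_⟩
      · apply lt_min (by linarith) (by positivity)
      · have h1 : min (Δ / 2) (δ / (2 * lam2)) ≤ δ / (2 * lam2) := min_le_right _ _
        calc 2 * lam2 * min (Δ / 2) (δ / (2 * lam2)) ≤ 2 * lam2 * (δ / (2 * lam2)) :=
              mul_le_mul_of_nonneg_left h1 (by positivity)
          _ = δ := by field_simp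
    have hk := key t ht htΔ
    have e1 : lam2 * (2 * t * Δ - 2 * t ^ 2) = t * (2 * lam2 * Δ - 2 * lam2 * t) := by ring
    have e2 : 2 * (t * ε) + lam1 * (t * η) = t * (2 * ε + lam1 * η) := by ring
    rw [e1, e2] at hk
    have h5 : 2 * lam2 * Δ - 2 * lam2 * t ≤ 2 * ε + lam1 * η :=
      le_of_mul_le_mul_left hk ht
    linarith
  rw [show (1 / (2 * lam2)) * (2 * ε + lam1 * η) = (2 * ε + lam1 * η) / (2 * lam2) by
    ring, le_div_iff₀ (by positivity)]
  have e3 : Δ * (2 * lam2) = 2 * lam2 * Δ := by ring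
  rw [e3]
  exact hfin

/-- Quantitative grouping effect for the penalized Cox partial likelihood. -/
theorem stmt_15 {n p : ℕ} (X : Fin n → Fin p → ℝ) (R : Fin n → Finset (Fin n))
    (hR : ∀ i, (R i).Nonempty) (lam1 lam2 : ℝ) (hlam1 : 0 ≤ lam1) (hlam2 : 0 < lam2)
    (w : Fin p → ℝ) (hw : ∀ k, 0 ≤ w k)
    (F L : EuclideanSpace ℝ (Fin p) → ℝ)
    (hF : ∀ β, F β = (1 / (n : ℝ)) * ∑ i, (-(∑ k, β k * X i k) +
      Real.log (∑ j ∈ R i, Real.exp (∑ k, β k * X j k))))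
    (hL : ∀ β, L β = F β + lam1 * ∑ k, w k * |β k| + lam2 * ‖β‖ ^ 2)
    (βhat : EuclideanSpace ℝ (Fin p)) (hmin : ∀ β, L βhat ≤ L β)
    (a b : Fin p) (hab : βhat a * βhat b > 0)
    (ε η : ℝ) (hx : ∀ j, |X j a - X j b| ≤ ε) (hwab : |w a - w b| ≤ η) :
    |βhat a - βhat b| ≤ (1 / (2 * lam2)) * (2 * ε + lam1 * η) := by
  rw [abs_sub_le_iff]
  constructor
  · exact stmt_15_aux X R hR lam1 lam2 hlam1 hlam2 w hw F L hF hL βhat hmin a b hab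
      ε η hx hwab
  · exact stmt_15_aux X R hR lam1 lam2 hlam1 hlam2 w hw F L hF hL βhat hmin b a
      (by rw [mul_comm]; exact hab) ε η
      (fun j => by rw [abs_sub_comm]; exact hx j)
      (by rw [abs_sub_comm]; exact hwab)
end
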